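/- Let c > 0 and K₀ be the absolute constants from the L²-flattening lemma. Let p be a prime, η a symmetric probability measure on SL₂(𝔽_p), and K a real number with K₀ ≤ K < p^{1/10}, such that η(gH) < K^{-1} for every proper subgroup H of SL₂(𝔽_p) and every g ∈ SL₂(𝔽_p). Then for every ℓ ∈ ℕ, ‖η^{(2^{ℓ+1})}‖_∞ ≤ ‖η^{(2^ℓ)}‖₂² ≤ 2·K^{-2cℓ}·‖η‖₂² + 2·K²·p^{-3}. -/

import Mathlib

open scoped Classical

/-- Convolution of two real functions on a finite group:
`(f₁ ∗ f₂)(x) = ∑_h f₁(h)·f₂(h⁻¹x)`. -/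
noncomputable def conv {G : Type*} [Group G] [Fintype G] (f₁ f₂ : G → ℝ) : G → ℝ :=
  fun x => ∑ h, f₁ h * f₂ (h⁻¹ * x)

/-- The `ℓ`-fold convolution `f^{(ℓ)}` of `f` with itself (with `f^{(0)}` the point
mass at the identity, so that `f^{(1)} = f`). -/
noncomputable def iterConv {G : Type*} [Group G] [Fintype G] (f : G → ℝ) : ℕ → G → ℝ
  | 0 => fun x => if x = 1 then 1 else 0
  | n + 1 => conv (iterConv f n) f

/-- `‖f‖₂ = (∑_g f(g)²)^{1/2}`. -/
noncomputable def l2Norm {G : Type*} [Fintype G] (f : G → ℝ) : ℝ :=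
  Real.sqrt (∑ g, f g ^ 2)

/-- `‖f‖_∞ = max_g f(g)` (for a function on a finite type). -/
noncomputable def supNorm {G : Type*} [Fintype G] (f : G → ℝ) : ℝ :=
  ⨆ g, f g

/-- The mass `η(gH) = ∑_{h ∈ H} η(g·h)` that `η` gives to the coset `gH`. -/
noncomputable def cosetMass {G : Type*} [Group G] [Fintype G] (η : G → ℝ) (g : G)
    (H : Subgroup G) : ℝ :=
  ∑ h : H, η (g * h)

/-- `η` is a probability measure on the finite group `G`: it is nonnegative and sums to 1. -/
def IsProbMeasure {G : Type*} [Group G] [Fintype G] (η : G → ℝ) : Prop :=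
  (∀ g, 0 ≤ η g) ∧ ∑ g, η g = 1

/-- `η` is symmetric: `η(g) = η(g⁻¹)` for all `g`. -/
def IsSymmetric {G : Type*} [Group G] (η : G → ℝ) : Prop :=
  ∀ g, η g = η g⁻¹

set_option linter.unusedSectionVars false
set_option linter.unusedVariables false

section Aux
variable {G : Type*} [Group G] [Fintype G]

lemma sum_shift (g : G → ℝ) (a : G) : ∑ x, g (a * x) = ∑ x, g x :=
  Equiv.sum_comp (Equiv.mulLeft a) g

lemma sum_inv_shift (g : G → ℝ) (a : G) : ∑ x : G, g (x⁻¹ * a) = ∑ x, g x := by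
  have := Equiv.sum_comp ((Equiv.inv G).trans (Equiv.mulRight a)) g
  simpa using this

lemma conv_nonneg' {f g : G → ℝ} (hf : ∀ x, 0 ≤ f x) (hg : ∀ x, 0 ≤ g x) (x : G) :
    0 ≤ conv f g x := Finset.sum_nonneg fun h _ => mul_nonneg (hf h) (hg _)

lemma sum_conv (f g : G → ℝ) : ∑ x, conv f g x = (∑ x, f x) * ∑ x, g x := by
  unfold conv
  rw [Finset.sum_comm, Finset.sum_mul]
  exact Finset.sum_congr rfl fun h _ => by rw [← Finset.mul_sum, sum_shift g h⁻¹]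

lemma conv_assoc (f g h : G → ℝ) : conv (conv f g) h = conv f (conv g h) := by
  funext x
  unfold conv
  simp only [Finset.sum_mul, ← Finset.mul_sum]
  rw [Finset.sum_comm]
  refine Finset.sum_congr rfl fun z _ => ?_
  rw [Finset.mul_sum, ← Equiv.sum_comp (Equiv.mulLeft z)
    (fun y => f z * g (z⁻¹ * y) * h (y⁻¹ * x))]
  refine Finset.sum_congr rfl fun y _ => ?_
  simp [mul_assoc, mul_inv_rev]

lemma delta_conv (f : G → ℝ) (g : G → ℝ) : conv (iterConv g 0) f = f := by
  funext x
  simp [conv, iterConv, ite_mul]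

lemma conv_delta (f : G → ℝ) (g : G → ℝ) : conv f (iterConv g 0) = f := by
  funext x
  simp [conv, iterConv, mul_ite, inv_mul_eq_one]

lemma iterConv_one' (f : G → ℝ) : iterConv f 1 = f := delta_conv f f

lemma iterConv_succ_left (f : G → ℝ) : ∀ n, iterConv f (n + 1) = conv f (iterConv f n)
  | 0 => by rw [show iterConv f 1 = conv (iterConv f 0) f from rfl, delta_conv, conv_delta]
  | n + 1 => by
    show conv (iterConv f (n + 1)) f = conv f (conv (iterConv f n) f)
    rw [iterConv_succ_left f n, conv_assoc]

lemma iterConv_add (f : G → ℝ) (m : ℕ) : ∀ n, iterConv f (m + n) = conv (iterConv f m) (iterConv f n)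
  | 0 => by rw [Nat.add_zero, conv_delta]
  | n + 1 => by
    show conv (iterConv f (m + n)) f = conv (iterConv f m) (conv (iterConv f n) f)
    rw [iterConv_add f m n, conv_assoc]

end Aux

section Aux2
variable {G : Type*} [Group G] [Fintype G]

lemma iterConv_nonneg {f : G → ℝ} (hf : ∀ x, 0 ≤ f x) : ∀ n x, 0 ≤ iterConv f n x
  | 0, x => by simp only [iterConv]; split <;> norm_num
  | n + 1, x => conv_nonneg' (iterConv_nonneg hf n) hf x

lemma iterConv_prob {f : G → ℝ} (hf : IsProbMeasure f) (n : ℕ) :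
    IsProbMeasure (iterConv f n) := by
  induction n with
  | zero =>
    refine ⟨iterConv_nonneg hf.1 0, ?_⟩
    simp [iterConv]
  | succ n ih =>
    refine ⟨iterConv_nonneg hf.1 (n + 1), ?_⟩
    show ∑ x, conv (iterConv f n) f x = 1
    rw [sum_conv, ih.2, hf.2, one_mul]

lemma conv_inv_apply {f g : G → ℝ} (hf : IsSymmetric f) (hg : IsSymmetric g) (x : G) :
    conv f g x⁻¹ = conv g f x := by
  unfold conv
  rw [← Equiv.sum_comp (Equiv.mulLeft x⁻¹) (fun h => f h * g (h⁻¹ * x⁻¹))]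
  refine Finset.sum_congr rfl fun h _ => ?_
  simp only [Equiv.coe_mulLeft]
  have h1 : (x⁻¹ * h)⁻¹ * x⁻¹ = h⁻¹ := by group
  rw [h1, ← hg h, hf (x⁻¹ * h), mul_inv_rev, inv_inv, mul_comm]

lemma iterConv_symm {f : G → ℝ} (hf : IsSymmetric f) : ∀ n, IsSymmetric (iterConv f n)
  | 0 => fun x => by simp [iterConv, inv_eq_one]
  | n + 1 => fun x => by
    have hn := iterConv_symm hf n
    have : iterConv f (n + 1) x⁻¹ = iterConv f (n + 1) x := by
      show conv (iterConv f n) f x⁻¹ = iterConv f (n + 1) x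
      rw [conv_inv_apply hn hf, ← iterConv_succ_left]
    exact this.symm

lemma l2Norm_nonneg (f : G → ℝ) : 0 ≤ l2Norm f := Real.sqrt_nonneg _

lemma l2Norm_sq (f : G → ℝ) : l2Norm f ^ 2 = ∑ g, f g ^ 2 :=
  Real.sq_sqrt (Finset.sum_nonneg fun g _ => sq_nonneg _)

lemma conv_self_apply_le {f : G → ℝ} (hf : ∀ x, 0 ≤ f x) (x : G) :
    conv f f x ≤ l2Norm f ^ 2 := by
  have h1 : (conv f f x) ^ 2 ≤ (∑ g, f g ^ 2) * ∑ h : G, f (h⁻¹ * x) ^ 2 :=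
    Finset.sum_mul_sq_le_sq_mul_sq Finset.univ f (fun h => f (h⁻¹ * x))
  rw [sum_inv_shift (fun g => f g ^ 2) x] at h1
  rw [l2Norm_sq]
  refine le_of_pow_le_pow_left₀ two_ne_zero (Finset.sum_nonneg fun g _ => sq_nonneg _) ?_
  calc (conv f f x) ^ 2 ≤ (∑ g, f g ^ 2) * ∑ g, f g ^ 2 := h1
    _ = (∑ g, f g ^ 2) ^ 2 := (sq _).symm

lemma supNorm_conv_self_le {f : G → ℝ} (hf : ∀ x, 0 ≤ f x) :
    supNorm (conv f f) ≤ l2Norm f ^ 2 :=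
  ciSup_le fun x => conv_self_apply_le hf x

lemma l2Norm_conv_le {f η : G → ℝ} (hf : ∀ x, 0 ≤ f x) (hη : IsProbMeasure η) :
    l2Norm (conv f η) ≤ l2Norm f := by
  unfold l2Norm
  apply Real.sqrt_le_sqrt
  have key : ∀ x, conv f η x ^ 2 ≤ ∑ h : G, f h ^ 2 * η (h⁻¹ * x) := by
    intro x
    have h1 : (∑ h : G, (f h * Real.sqrt (η (h⁻¹ * x))) * Real.sqrt (η (h⁻¹ * x))) ^ 2
        ≤ (∑ h : G, (f h * Real.sqrt (η (h⁻¹ * x))) ^ 2) * ∑ h : G, Real.sqrt (η (h⁻¹ * x)) ^ 2 :=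
      Finset.sum_mul_sq_le_sq_mul_sq Finset.univ _ _
    have e1 : ∀ h : G, (f h * Real.sqrt (η (h⁻¹ * x))) * Real.sqrt (η (h⁻¹ * x)) = f h * η (h⁻¹ * x) := by
      intro h
      rw [mul_assoc, Real.mul_self_sqrt (hη.1 _)]
    have e2 : ∀ h : G, (f h * Real.sqrt (η (h⁻¹ * x))) ^ 2 = f h ^ 2 * η (h⁻¹ * x) := by
      intro h
      rw [mul_pow, Real.sq_sqrt (hη.1 _)]
    have e3 : ∀ h : G, Real.sqrt (η (h⁻¹ * x)) ^ 2 = η (h⁻¹ * x) := fun h => Real.sq_sqrt (hη.1 _)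
    simp only [e1, e2, e3] at h1
    rw [sum_inv_shift η x, hη.2, mul_one] at h1
    exact h1
  calc ∑ x, conv f η x ^ 2 ≤ ∑ x, ∑ h : G, f h ^ 2 * η (h⁻¹ * x) :=
        Finset.sum_le_sum fun x _ => key x
    _ = ∑ h : G, f h ^ 2 * ∑ x, η (h⁻¹ * x) := by
        rw [Finset.sum_comm]
        exact Finset.sum_congr rfl fun h _ => (Finset.mul_sum _ _ _).symm
    _ = ∑ h, f h ^ 2 := by
        refine Finset.sum_congr rfl fun h _ => ?_
        rw [sum_shift η h⁻¹, hη.2, mul_one]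

lemma cosetMass_conv (f η : G → ℝ) (g : G) (H : Subgroup G) :
    cosetMass (conv f η) g H = ∑ y, f y * cosetMass η (y⁻¹ * g) H := by
  unfold cosetMass conv
  rw [Finset.sum_comm]
  refine Finset.sum_congr rfl fun y _ => ?_
  rw [Finset.mul_sum]
  exact Finset.sum_congr rfl fun h _ => by rw [mul_assoc]

lemma cosetMass_conv_lt' {f η : G → ℝ} (hf : IsProbMeasure f) {K : ℝ} (H : Subgroup G)
    (hη : ∀ g, cosetMass η g H < K⁻¹) (g : G) : cosetMass (conv f η) g H < K⁻¹ := by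
  rw [cosetMass_conv]
  have hex : ∃ y : G, 0 < f y := by
    by_contra hcon
    push_neg at hcon
    have : ∑ y, f y = 0 := Finset.sum_eq_zero fun y _ => le_antisymm (hcon y) (hf.1 y)
    rw [hf.2] at this
    exact one_ne_zero this
  obtain ⟨y₀, hy₀⟩ := hex
  have hlt : ∑ y, f y * cosetMass η (y⁻¹ * g) H < ∑ y : G, f y * K⁻¹ := by
    refine Finset.sum_lt_sum (fun y _ => mul_le_mul_of_nonneg_left (hη _).le (hf.1 y)) ?_
    exact ⟨y₀, Finset.mem_univ _, mul_lt_mul_of_pos_left (hη _) hy₀⟩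
  rwa [← Finset.sum_mul, hf.2, one_mul] at hlt

end Aux2

/-- Sup-norm consequence of iterated `L²`-flattening: if `c > 0` and `K₀` are absolute
constants for which the flattening lemma holds, `p` is a prime, `η` a symmetric
probability measure on `SL₂(𝔽_p)` and `K₀ ≤ K < p^{1/10}` with `η(gH) < K⁻¹` for all
proper subgroups `H` and all `g`, then for every `ℓ ∈ ℕ`,
`‖η^{(2^{ℓ+1})}‖_∞ ≤ ‖η^{(2^ℓ)}‖₂² ≤ 2·K^{-2cℓ}·‖η‖₂² + 2·K²·p^{-3}`. -/
theorem supNorm_iterated_l2_flattening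
    (c : ℝ) (hc : 0 < c) (K₀ : ℝ)
    (hflat : ∀ (p : ℕ) [Fact p.Prime],
      ∀ η : Matrix.SpecialLinearGroup (Fin 2) (ZMod p) → ℝ,
        IsProbMeasure η → IsSymmetric η →
        ∀ K : ℝ, K₀ ≤ K → K < (p : ℝ) ^ ((1 : ℝ) / 10) →
          (∀ H : Subgroup (Matrix.SpecialLinearGroup (Fin 2) (ZMod p)), H ≠ ⊤ →
            ∀ g, cosetMass η g H < K⁻¹) →
          l2Norm η > K * (p : ℝ) ^ (-(3 : ℝ) / 2) →
          l2Norm (conv η η) < K ^ (-c) * l2Norm η)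
    (p : ℕ) [Fact p.Prime]
    (η : Matrix.SpecialLinearGroup (Fin 2) (ZMod p) → ℝ)
    (hη : IsProbMeasure η) (hsym : IsSymmetric η)
    (K : ℝ) (hK₀ : K₀ ≤ K) (hK : K < (p : ℝ) ^ ((1 : ℝ) / 10))
    (hcoset : ∀ H : Subgroup (Matrix.SpecialLinearGroup (Fin 2) (ZMod p)), H ≠ ⊤ →
      ∀ g, cosetMass η g H < K⁻¹) :
    ∀ ℓ : ℕ,
      supNorm (iterConv η (2 ^ (ℓ + 1))) ≤ l2Norm (iterConv η (2 ^ ℓ)) ^ 2 ∧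
      l2Norm (iterConv η (2 ^ ℓ)) ^ 2
        ≤ 2 * K ^ (-(2 * c * ℓ)) * l2Norm η ^ 2 + 2 * K ^ 2 * (p : ℝ) ^ (-(3 : ℝ)) := by
  haveI : Nontrivial (Matrix.SpecialLinearGroup (Fin 2) (ZMod p)) := by
    refine ⟨⟨⟨!![1, 1; 0, 1], by simp [Matrix.det_fin_two_of]⟩, 1, ?_⟩⟩
    intro hcon
    have h01 := congrArg (fun A : (Matrix.SpecialLinearGroup (Fin 2) (ZMod p)) => (A : Matrix (Fin 2) (Fin 2) (ZMod p)) 0 1) hcon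
    simp [Matrix.SpecialLinearGroup.coe_one] at h01
  -- K is positive
  have hKpos : 0 < K := by
    have hb : (⊥ : Subgroup (Matrix.SpecialLinearGroup (Fin 2) (ZMod p))) ≠ ⊤ := bot_ne_top
    have h1 := hcoset ⊥ hb 1
    have he : cosetMass η 1 (⊥ : Subgroup (Matrix.SpecialLinearGroup (Fin 2) (ZMod p))) = η 1 := by
      simp [cosetMass]
      congr 1
    rw [he] at h1
    exact inv_pos.mp (lt_of_le_of_lt (hη.1 1) h1)
  have hppos : (0 : ℝ) < (p : ℝ) := by
    exact_mod_cast (Fact.out (p := p.Prime)).pos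
  -- basic facts about iterated convolutions of η
  have hnn : ∀ n, ∀ x, 0 ≤ iterConv η n x := iterConv_nonneg hη.1
  have hprob : ∀ n, IsProbMeasure (iterConv η n) := iterConv_prob hη
  have hsymn : ∀ n, IsSymmetric (iterConv η n) := iterConv_symm hsym
  have hcosn : ∀ n (H : Subgroup (Matrix.SpecialLinearGroup (Fin 2) (ZMod p))), H ≠ ⊤ → ∀ g, cosetMass (iterConv η (n + 1)) g H < K⁻¹ := by
    intro n H hH g
    exact cosetMass_conv_lt' (hprob n) H (hcoset H hH) g
  have hsplit : ∀ ℓ : ℕ, iterConv η (2 ^ (ℓ + 1)) = conv (iterConv η (2 ^ ℓ)) (iterConv η (2 ^ ℓ)) := by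
    intro ℓ
    rw [← iterConv_add, ← two_mul, ← pow_succ']
  have hmono : ∀ ℓ : ℕ, l2Norm (iterConv η (2 ^ (ℓ + 1))) ≤ l2Norm (iterConv η (2 ^ ℓ)) := by
    intro ℓ
    rw [hsplit ℓ]
    exact l2Norm_conv_le (hnn _) (hprob _)
  have hu0 : iterConv η (2 ^ 0) = η := by rw [pow_zero, iterConv_one']
  have hT : (0 : ℝ) ≤ 2 * K ^ 2 * (p : ℝ) ^ (-(3 : ℝ)) := by positivity
  -- part (a)
  have partA : ∀ ℓ : ℕ, supNorm (iterConv η (2 ^ (ℓ + 1))) ≤ l2Norm (iterConv η (2 ^ ℓ)) ^ 2 := by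
    intro ℓ
    rw [hsplit ℓ]
    exact supNorm_conv_self_le (hnn _)
  -- part (b)
  have partB : ∀ ℓ : ℕ, l2Norm (iterConv η (2 ^ ℓ)) ^ 2
      ≤ 2 * K ^ (-(2 * c * ℓ)) * l2Norm η ^ 2 + 2 * K ^ 2 * (p : ℝ) ^ (-(3 : ℝ)) := by
    rcases lt_or_ge K 1 with hK1 | hK1
    · -- degenerate case K < 1 : use monotonicity only
      intro ℓ
      have hdec : ∀ m : ℕ, l2Norm (iterConv η (2 ^ m)) ≤ l2Norm η := by
        intro m
        induction m with
        | zero => rw [hu0]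
        | succ n ih => exact le_trans (hmono n) ih
      have h1 : l2Norm (iterConv η (2 ^ ℓ)) ^ 2 ≤ l2Norm η ^ 2 :=
        pow_le_pow_left₀ (l2Norm_nonneg _) (hdec ℓ) 2
      have h2 : (1 : ℝ) ≤ K ^ (-(2 * c * ℓ)) := by
        have h := Real.rpow_le_rpow_of_exponent_ge (x := K) (y := (0 : ℝ))
          (z := -(2 * c * (ℓ : ℝ))) hKpos hK1.le (neg_nonpos.mpr (by positivity))
        rwa [Real.rpow_zero] at h
      have h3 : 1 * l2Norm η ^ 2 ≤ K ^ (-(2 * c * ℓ)) * l2Norm η ^ 2 :=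
        mul_le_mul_of_nonneg_right h2 (sq_nonneg _)
      nlinarith [sq_nonneg (l2Norm η)]
    · -- main case 1 ≤ K : induction using the flattening lemma
      intro ℓ
      induction ℓ with
      | zero =>
        rw [hu0]
        have : K ^ (-(2 * c * ((0 : ℕ) : ℝ))) = 1 := by
          norm_num
        rw [this]
        nlinarith [sq_nonneg (l2Norm η)]
      | succ n ih =>
        set g := iterConv η (2 ^ n) with hg
        rcases lt_or_ge (K * (p : ℝ) ^ (-(3 : ℝ) / 2)) (l2Norm g) with hbig | hsmall
        · -- flattening applies
          have hcos' : ∀ H : Subgroup (Matrix.SpecialLinearGroup (Fin 2) (ZMod p)), H ≠ ⊤ → ∀ x, cosetMass g x H < K⁻¹ := by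
            intro H hH x
            obtain ⟨m, hm⟩ : ∃ m, 2 ^ n = m + 1 :=
              ⟨2 ^ n - 1, by have := Nat.one_le_two_pow (n := n); omega⟩
            rw [hg, hm]
            exact hcosn m H hH x
          have hflt := hflat p g (hprob _) (hsymn _) K hK₀ hK hcos' hbig
          have heq : iterConv η (2 ^ (n + 1)) = conv g g := hsplit n
          have hA : (0 : ℝ) < K ^ (-(2 * c * (n : ℝ))) := Real.rpow_pos_of_pos hKpos _
          have hBpos : (0 : ℝ) < K ^ (-(2 * c)) := Real.rpow_pos_of_pos hKpos _
          have hB1 : K ^ (-(2 * c)) ≤ 1 :=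
            Real.rpow_le_one_of_one_le_of_nonpos hK1 (neg_nonpos.mpr (by positivity))
          have hsq : l2Norm (iterConv η (2 ^ (n + 1))) ^ 2 ≤ (K ^ (-c) * l2Norm g) ^ 2 := by
            rw [heq]
            exact pow_le_pow_left₀ (l2Norm_nonneg _) hflt.le 2
          have hKc2 : (K ^ (-c)) ^ 2 = K ^ (-(2 * c)) := by
            rw [← Real.rpow_natCast (K ^ (-c)) 2, ← Real.rpow_mul hKpos.le]
            norm_num
            ring_nf
          have h1 : l2Norm (iterConv η (2 ^ (n + 1))) ^ 2
              ≤ K ^ (-(2 * c)) * l2Norm g ^ 2 := by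
            calc l2Norm (iterConv η (2 ^ (n + 1))) ^ 2 ≤ (K ^ (-c) * l2Norm g) ^ 2 := hsq
              _ = (K ^ (-c)) ^ 2 * l2Norm g ^ 2 := by ring
              _ = K ^ (-(2 * c)) * l2Norm g ^ 2 := by rw [hKc2]
          have hexp : K ^ (-(2 * c * ((n + 1 : ℕ) : ℝ)))
              = K ^ (-(2 * c * (n : ℝ))) * K ^ (-(2 * c)) := by
            rw [← Real.rpow_add hKpos]
            congr 1
            push_cast
            ring
          calc l2Norm (iterConv η (2 ^ (n + 1))) ^ 2
              ≤ K ^ (-(2 * c)) * l2Norm g ^ 2 := h1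
            _ ≤ K ^ (-(2 * c)) * (2 * K ^ (-(2 * c * (n : ℝ))) * l2Norm η ^ 2
                + 2 * K ^ 2 * (p : ℝ) ^ (-(3 : ℝ))) :=
                mul_le_mul_of_nonneg_left ih hBpos.le
            _ = 2 * (K ^ (-(2 * c * (n : ℝ))) * K ^ (-(2 * c))) * l2Norm η ^ 2
                + K ^ (-(2 * c)) * (2 * K ^ 2 * (p : ℝ) ^ (-(3 : ℝ))) := by ring
            _ ≤ 2 * (K ^ (-(2 * c * (n : ℝ))) * K ^ (-(2 * c))) * l2Norm η ^ 2
                + 1 * (2 * K ^ 2 * (p : ℝ) ^ (-(3 : ℝ))) := by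
                exact add_le_add_right (mul_le_mul_of_nonneg_right hB1 hT) _
            _ = 2 * K ^ (-(2 * c * ((n + 1 : ℕ) : ℝ))) * l2Norm η ^ 2
                + 2 * K ^ 2 * (p : ℝ) ^ (-(3 : ℝ)) := by
                rw [hexp]; ring
        · -- small norm: absorb into second term
          have h1 : l2Norm (iterConv η (2 ^ (n + 1))) ≤ K * (p : ℝ) ^ (-(3 : ℝ) / 2) :=
            le_trans (hmono n) hsmall
          have h2 : l2Norm (iterConv η (2 ^ (n + 1))) ^ 2
              ≤ (K * (p : ℝ) ^ (-(3 : ℝ) / 2)) ^ 2 :=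
            pow_le_pow_left₀ (l2Norm_nonneg _) h1 2
          have h3 : (K * (p : ℝ) ^ (-(3 : ℝ) / 2)) ^ 2 = K ^ 2 * (p : ℝ) ^ (-(3 : ℝ)) := by
            rw [mul_pow, ← Real.rpow_natCast ((p : ℝ) ^ (-(3 : ℝ) / 2)) 2,
              ← Real.rpow_mul hppos.le]
            norm_num
          have h4 : (0 : ℝ) ≤ 2 * K ^ (-(2 * c * ((n + 1 : ℕ) : ℝ))) * l2Norm η ^ 2 := by
            have := Real.rpow_pos_of_pos hKpos (-(2 * c * ((n + 1 : ℕ) : ℝ)))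
            positivity
          have h5 : (0 : ℝ) ≤ K ^ 2 * (p : ℝ) ^ (-(3 : ℝ)) := by positivity
          linarith [h2, h3 ▸ h2]
  exact fun ℓ => ⟨partA ℓ, partB ℓ⟩
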